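/- arXiv:1902.07803 — 2 statements merged into one kernel-verified Lean document; each statement's English description precedes it below -/
import Mathlib

section
/- Assume 2g − 2 + n > 0. If g > 0, the poset SP_{g,n} of stable spin graphs of genus g with n legs has exactly two connected components, SP⁺_{g,n} and SP⁻_{g,n}, consisting respectively of the even and odd spin graphs. If g = 0, then SP_{g,n} is connected and SP_{g,n} = SP⁺_{g,n}. -/
/-!
Common combinatorial preliminaries: weighted graphs with legs, contractions,
spin structures, following Caporaso–Melo–Pacini, "Tropicalizing the moduli
space of spin curves".
-/

attribute [local instance] Classical.propDecidable

noncomputable section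

/-- A weighted graph with legs.  Edges are recorded as elements of a finite
type `E` together with their (unordered) pair of endpoints `ends e : Sym2 V`
(a loop corresponds to a diagonal pair); legs are elements of a finite type
`Lg` with an endpoint map `legEnd`; `w` is the weight function. -/
structure WGraph : Type 1 where
  V : Type
  E : Type
  Lg : Type
  fV : Fintype V
  fE : Fintype E
  fL : Fintype Lg
  dV : DecidableEq V
  dE : DecidableEq E
  dL : DecidableEq Lg
  neV : Nonempty V
  ends : E → Sym2 V
  legEnd : Lg → V
  w : V → ℕ

attribute [instance] WGraph.fV WGraph.fE WGraph.fL WGraph.dV WGraph.dE WGraph.dL WGraph.neV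

namespace WGraph

variable (G : WGraph)

/-- The multiplicity of the vertex `v` in the edge `e` (`2` for a loop at `v`). -/
def degMul (v : G.V) (e : G.E) : ℕ :=
  Sym2.lift ⟨fun a b => (if a = v then 1 else 0) + (if b = v then 1 else 0),
    fun _ _ => add_comm _ _⟩ (G.ends e)

/-- The degree of a vertex: number of non-leg half-edges ending at it. -/
def deg (v : G.V) : ℕ := ∑ e, G.degMul v e

/-- The number of legs ending at a vertex. -/
def legsAt (v : G.V) : ℕ := (Finset.univ.filter fun l => G.legEnd l = v).card

/-- The number of loops based at a vertex. -/
def loops (v : G.V) : ℕ := (Finset.univ.filter fun e => G.ends e = Sym2.diag v).card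

/-- The boundary map `∂ : E_G → V_G` over `F₂`, sending an edge to the sum of
its two endpoints. -/
def boundary : (G.E → ZMod 2) →ₗ[ZMod 2] (G.V → ZMod 2) where
  toFun x := fun v => ∑ e, x e * (G.degMul v e : ZMod 2)
  map_add' x y := by
    funext v
    simp [add_mul, Finset.sum_add_distrib]
  map_smul' c x := by
    funext v
    simp [Finset.mul_sum, mul_assoc]

/-- The `F₂`-indicator vector of a set of edges. -/
def indicator (P : Finset G.E) : G.E → ZMod 2 := fun e => if e ∈ P then 1 else 0

/-- A subset of edges is cyclic if it lies in the cycle space `C_G = ker ∂`,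
i.e. its indicator vector is killed by the boundary map. -/
def IsCyclic (P : Finset G.E) : Prop := G.boundary (G.indicator P) = 0

/-- Adjacency through an edge belonging to `P`. -/
def PAdj (P : Finset G.E) (u v : G.V) : Prop :=
  ∃ e ∈ P, u ∈ G.ends e ∧ v ∈ G.ends e

/-- The vertex set of the contraction `G/P`: connected components of `(V, P)`. -/
def CompV (P : Finset G.E) : Type := Quot (G.PAdj P)

instance (P : Finset G.E) : Finite (G.CompV P) := Quot.finite _
instance (P : Finset G.E) : Fintype (G.CompV P) := Fintype.ofFinite _
instance (P : Finset G.E) : Nonempty (G.CompV P) := G.neV.map (Quot.mk _)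

/-- The set of vertices of `G` lying in a given component. -/
def fiberV (P : Finset G.E) (x : G.CompV P) : Finset G.V :=
  Finset.univ.filter fun v => Quot.mk (G.PAdj P) v = x

/-- The set of edges of `P` lying in a given component. -/
def fiberE (P : Finset G.E) (x : G.CompV P) : Finset G.E :=
  P.filter fun e => ∀ v ∈ G.ends e, Quot.mk (G.PAdj P) v = x

/-- The weight of a vertex `x` of `G/P`: the genus of its preimage, i.e. the
sum of the weights of the vertices in the component plus its first Betti
number `#edges - #vertices + 1`. -/
def quotWeight (P : Finset G.E) (x : G.CompV P) : ℕ :=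
  (∑ v ∈ G.fiberV P x, G.w v) + ((G.fiberE P x).card + 1 - (G.fiberV P x).card)

/-- Connectedness of the graph. -/
def Connected : Prop := ∀ u v : G.V, Relation.EqvGen (G.PAdj Finset.univ) u v

/-- The number of connected components `c(G)`. -/
def numComp : ℕ := Nat.card (G.CompV Finset.univ)

/-- The first Betti number `b₁(G) = |E| - |V| + c(G)`. -/
def b1 : ℕ := Fintype.card G.E + G.numComp - Fintype.card G.V

/-- The genus `g(G) = Σ_v w(v) + b₁(G)`. -/
def genus : ℕ := (∑ v, G.w v) + G.b1

/-- The number of legs. -/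
def numLegs : ℕ := Fintype.card G.Lg

/-- Stability: connected and `2w(v) - 2 + deg(v) + ℓ(v) > 0` at every vertex. -/
def Stable : Prop :=
  G.Connected ∧ ∀ v : G.V, 2 < 2 * G.w v + G.deg v + G.legsAt v

/-- `G` is Eulerian (cyclic) if every vertex has even degree, i.e. the set of
all edges lies in the cycle space. -/
def Eulerian : Prop := G.IsCyclic Finset.univ

/-- A basic graph: a stable cyclic (Eulerian) graph of genus `≥ 2` with at
least one edge, all weights `≤ 1`, and `w(v) + deg(v) + ℓ(v) ≤ 4` at every
vertex with equality only if there is a loop at `v`. -/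
def IsBasic : Prop :=
  G.Stable ∧ 2 ≤ G.genus ∧ Nonempty G.E ∧ G.Eulerian ∧
  (∀ v, G.w v ≤ 1) ∧
  (∀ v, G.w v + G.deg v + G.legsAt v ≤ 4) ∧
  (∀ v, G.w v + G.deg v + G.legsAt v = 4 → 1 ≤ G.loops v)

/-- `c⁺`: the number of vertices of `G/P` of positive weight, i.e. the number
of connected components of `P̄` of positive genus. -/
def cPlus (P : Finset G.E) : ℕ :=
  (Finset.univ.filter fun x : G.CompV P => 0 < G.quotWeight P x).card

/-- The contracted graph `G/P`. -/
def contract (P : Finset G.E) : WGraph where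
  V := G.CompV P
  E := {e : G.E // e ∉ P}
  Lg := G.Lg
  fV := inferInstance
  fE := inferInstance
  fL := G.fL
  dV := Classical.decEq _
  dE := inferInstance
  dL := G.dL
  neV := inferInstance
  ends := fun e => (G.ends e.1).map (Quot.mk (G.PAdj P))
  legEnd := fun l => Quot.mk (G.PAdj P) (G.legEnd l)
  w := G.quotWeight P

/-- An ordered pair of endpoints of an edge. -/
def endPair (e : G.E) : G.V × G.V := Classical.choose (Quot.exists_rep (G.ends e))

end WGraph

/-- A spin structure on a graph `G`: a cyclic subset `P` of edges and a sign
function on the vertices of `G/P` vanishing at all vertices of weight `0`. -/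
structure SpinStructure (G : WGraph) where
  P : Finset G.E
  cyclic : G.IsCyclic P
  s : G.CompV P → ZMod 2
  vanish : ∀ x, G.quotWeight P x = 0 → s x = 0

/-- The parity of a spin structure: the parity of `Σ_{v ∈ V(G/P)} s(v)`. -/
def SpinStructure.parity {G : WGraph} (σ : SpinStructure G) : ZMod 2 := ∑ x, σ.s x

/-- A contraction of graphs `γ : G → G' = G/F`: the edges of `G'` are
identified with `E(G) ∖ F`, the legs of `G'` with those of `G`; the vertex
map is surjective, its fibers are exactly the connected components of
`(V(G), F)`, endpoints and legs are compatible, and the weight of a vertex of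
`G'` is the genus of its preimage. -/
structure Contraction (G G' : WGraph) where
  F : Finset G.E
  vMap : G.V → G'.V
  eEquiv : G'.E ≃ {e : G.E // e ∉ F}
  lEquiv : G'.Lg ≃ G.Lg
  vSurj : Function.Surjective vMap
  ends_compat : ∀ e' : G'.E, G'.ends e' = (G.ends (eEquiv e').1).map vMap
  leg_compat : ∀ l' : G'.Lg, G'.legEnd l' = vMap (G.legEnd (lEquiv l'))
  collapse : ∀ e ∈ F, ∀ u ∈ G.ends e, ∀ v ∈ G.ends e, vMap u = vMap v
  fiber_conn : ∀ u v : G.V, vMap u = vMap v → Relation.EqvGen (G.PAdj F) u v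
  w_compat : ∀ v' : G'.V,
    G'.w v' = (∑ v ∈ Finset.univ.filter (fun v => vMap v = v'), G.w v)
      + (((F.filter fun e => ∀ u ∈ G.ends e, vMap u = v').card + 1)
          - (Finset.univ.filter fun v => vMap v = v').card)

namespace Contraction

variable {G G' : WGraph} (γ : Contraction G G')

/-- The induced map `γ^E_* : E_G → E_{G'}` (γ^E_*(e) = e if e ∉ F, 0 else). -/
def eStar : (G.E → ZMod 2) →ₗ[ZMod 2] (G'.E → ZMod 2) where
  toFun x := fun e' => x (γ.eEquiv e').1
  map_add' _ _ := rfl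
  map_smul' _ _ := rfl

/-- The induced map `γ^V_* : V_G → V_{G'}`. -/
def vStar : (G.V → ZMod 2) →ₗ[ZMod 2] (G'.V → ZMod 2) where
  toFun x := fun v' => ∑ v ∈ Finset.univ.filter (fun v => γ.vMap v = v'), x v
  map_add' x y := by
    funext v'
    simp [Finset.sum_add_distrib]
  map_smul' c x := by
    funext v'
    simp [Finset.mul_sum]

/-- The pushforward `γ_* P = P ∖ F` of a set of edges, as a subset of `E(G')`. -/
def pushE (P : Finset G.E) : Finset G'.E :=
  Finset.univ.filter fun e' => (γ.eEquiv e' : {e : G.E // e ∉ γ.F}).1 ∈ P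

/-- The graph of the induced map `γ̄ : V(G/P) → V(G'/P')` on components. -/
def compMapsTo (P : Finset G.E) (P' : Finset G'.E)
    (x : G.CompV P) (x' : G'.CompV P') : Prop :=
  ∃ v : G.V, Quot.mk (G.PAdj P) v = x ∧ Quot.mk (G'.PAdj P') (γ.vMap v) = x'

/-- The pushforward sign function: `s'(v') = Σ_{v ∈ γ̄⁻¹(v')} s(v)`. -/
def pushS (P : Finset G.E) (s : G.CompV P → ZMod 2) :
    G'.CompV (γ.pushE P) → ZMod 2 :=
  fun x' => ∑ x ∈ Finset.univ.filter
    (fun x => γ.compMapsTo P (γ.pushE P) x x'), s x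

/-- `γ_* σ = σ'` for spin structures. -/
def SpinMapsTo (σ : SpinStructure G) (σ' : SpinStructure G') : Prop :=
  σ'.P = γ.pushE σ.P ∧ HEq σ'.s (γ.pushS σ.P σ.s)

end Contraction

/-- An automorphism of a graph: weight-preserving bijection on vertices,
bijection on edges compatible with endpoints, fixing every leg. -/
structure GraphAut (G : WGraph) where
  vE : G.V ≃ G.V
  eE : G.E ≃ G.E
  ends_compat : ∀ e, G.ends (eE e) = (G.ends e).map vE
  w_compat : ∀ v, G.w (vE v) = G.w v
  leg_fix : ∀ l, G.legEnd l = vE (G.legEnd l)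

namespace GraphAut

variable {G : WGraph}

/-- Composition of automorphisms (`α.comp β` acts by `β` first, then `α`). -/
def comp (α β : GraphAut G) : GraphAut G where
  vE := β.vE.trans α.vE
  eE := β.eE.trans α.eE
  ends_compat e := by
    simp only [Equiv.trans_apply, Equiv.coe_trans]
    rw [α.ends_compat, β.ends_compat, Sym2.map_map]
  w_compat v := by
    simp only [Equiv.trans_apply]
    rw [α.w_compat, β.w_compat]
  leg_fix l := by
    simp only [Equiv.trans_apply]
    rw [← β.leg_fix, ← α.leg_fix]

/-- `α_* σ = σ'` for an automorphism `α` and spin structures `σ, σ'`. -/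
def SpinMapsTo (α : GraphAut G) (σ σ' : SpinStructure G) : Prop :=
  σ'.P = σ.P.image α.eE ∧
  ∀ v : G.V, σ'.s (Quot.mk (G.PAdj σ'.P) (α.vE v)) = σ.s (Quot.mk (G.PAdj σ.P) v)

/-- `α` preserves the spin structure `σ`, i.e. `α_*(P,s) = (P,s)`. -/
def PreservesSpin (α : GraphAut G) (σ : SpinStructure G) : Prop :=
  α.SpinMapsTo σ σ

end GraphAut

/-- The graph `P̄ = G - R°` where `R = E ∖ P`: same vertices, edges `P`, and
the legs of `G` together with a pair of new legs for each edge of `R`, placed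
at its two endpoints. -/
def WGraph.legify (G : WGraph) (P : Finset G.E) : WGraph where
  V := G.V
  E := {e : G.E // e ∈ P}
  Lg := G.Lg ⊕ ({e : G.E // e ∉ P} × Bool)
  fV := G.fV
  fE := inferInstance
  fL := inferInstance
  dV := G.dV
  dE := inferInstance
  dL := inferInstance
  neV := G.neV
  ends := fun e => G.ends e.1
  legEnd := fun l =>
    match l with
    | Sum.inl l => G.legEnd l
    | Sum.inr (e, b) => if b then (G.endPair e.1).1 else (G.endPair e.1).2
  w := G.w

/-- `G` is a stable graph of genus `g` with `n` legs. -/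
def StG (g n : ℕ) (G : WGraph) : Prop := G.Stable ∧ G.genus = g ∧ G.numLegs = n

/-- Objects of the poset `C_{g,n}` before taking isomorphism classes. -/
def CycObj : Type 1 := Σ G : WGraph, Finset G.E

/-- Objects of the poset `SP_{g,n}` before taking isomorphism classes. -/
def SpinObj : Type 1 := Σ G : WGraph, SpinStructure G

/-- Order on graphs: `G ≥ G'` iff there is a contraction `G → G'`. -/
def GraphGe (G G' : WGraph) : Prop := Nonempty (Contraction G G')

/-- Order on `C_{g,n}`: `(G,P) ≥ (G',P')` iff some contraction pushes `P` to `P'`. -/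
def CycGe (a b : CycObj) : Prop := ∃ γ : Contraction a.1 b.1, γ.pushE a.2 = b.2

/-- Order on `SP_{g,n}`: `(G,P,s) ≥ (G',P',s')` iff some contraction pushes
`(P,s)` to `(P',s')`. -/
def SpinGe (a b : SpinObj) : Prop := ∃ γ : Contraction a.1 b.1, γ.SpinMapsTo a.2 b.2

/-- `q : X → Y` is a quotient of posets (for the `≥`-relations `geA`, `geB`):
it is surjective, order-preserving, and any relation downstairs lifts. -/
def IsPosetQuotient {α : Sort*} {β : Sort*}
    (geA : α → α → Prop) (geB : β → β → Prop) (q : α → β) : Prop :=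
  Function.Surjective q ∧
  (∀ a a', geA a a' → geB (q a) (q a')) ∧
  (∀ b b', geB b b' → ∃ a a', q a = b ∧ q a' = b' ∧ geA a a')

/-- Strict order `x > y` associated to a `≥`-relation. -/
def StrictGt {α : Sort*} (ge : α → α → Prop) (x y : α) : Prop := ge x y ∧ ¬ ge y x

/-- `x` covers `y`. -/
def Covers {α : Sort*} (ge : α → α → Prop) (x y : α) : Prop :=
  StrictGt ge x y ∧ ¬ ∃ z, StrictGt ge x z ∧ StrictGt ge z y

/-- `ρ` is a rank function for the `≥`-relation `ge`. -/
def IsRankFn {α : Sort*} (ge : α → α → Prop) (ρ : α → ℕ) : Prop :=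
  (∀ x y, StrictGt ge x y → ρ y < ρ x) ∧
  (∀ x y, Covers ge x y → ρ x = ρ y + 1)


section Aux
open Finset

lemma WGraph.padj_symm {G : WGraph} {P : Finset G.E} {u v : G.V} (h : G.PAdj P u v) :
    G.PAdj P v u := by
  obtain ⟨e, he, hu, hv⟩ := h; exact ⟨e, he, hv, hu⟩

lemma WGraph.card_fiberV_le (G : WGraph) (P : Finset G.E) (x : G.CompV P) :
    (G.fiberV P x).card ≤ (G.fiberE P x).card + 1 := by
  rcases (G.fiberV P x).eq_empty_or_nonempty with he | ⟨r, hr⟩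
  · simp [he]
  set reach : ℕ → G.V → Prop := fun k v =>
    ∃ c : ℕ → G.V, c 0 = r ∧ c k = v ∧ ∀ i < k, G.PAdj P (c i) (c (i + 1)) with hreachdef
  have reach_r : reach 0 r := ⟨fun _ => r, rfl, rfl, by omega⟩
  have extend : ∀ {k : ℕ} {u v : G.V}, reach k u → G.PAdj P u v → reach (k + 1) v := by
    rintro k u v ⟨c, hc0, hck, hstep⟩ huv
    refine ⟨fun i => if i ≤ k then c i else v, by simp [hc0], by simp, ?_⟩
    intro i hi
    rcases Nat.lt_or_ge i k with h1 | h1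
    · simpa [Nat.le_of_lt h1, Nat.succ_le_of_lt h1] using hstep i h1
    · have hik : i = k := by omega
      subst hik
      simp only [if_pos le_rfl, if_neg (by omega : ¬ i + 1 ≤ i), hck]
      exact huv
  have hiff : ∀ a b : G.V, Relation.EqvGen (G.PAdj P) a b →
      ((∃ k, reach k a) ↔ ∃ k, reach k b) := by
    intro a b hab
    induction hab with
    | rel a b hab =>
        exact ⟨fun ⟨k, hk⟩ => ⟨k + 1, extend hk hab⟩,
               fun ⟨k, hk⟩ => ⟨k + 1, extend hk (WGraph.padj_symm hab)⟩⟩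
    | refl a => exact Iff.rfl
    | symm a b _ ih => exact ih.symm
    | trans a b c _ _ ih1 ih2 => exact ih1.trans ih2
  have hreach : ∀ v ∈ G.fiberV P x, ∃ k, reach k v := by
    intro v hv
    have hvx : Quot.mk (G.PAdj P) v = x := (Finset.mem_filter.mp hv).2
    have hrx : Quot.mk (G.PAdj P) r = x := (Finset.mem_filter.mp hr).2
    exact (hiff v r (Quot.eqvGen_exact (hvx.trans hrx.symm))).mpr ⟨0, reach_r⟩
  set dd : G.V → ℕ := fun v => if h : ∃ k, reach k v then Nat.find h else 0 with hdddef
  have hdd : ∀ (w : G.V) (hw : ∃ k, reach k w), dd w = Nat.find hw := by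
    intro w hw; simp only [hdddef, dif_pos hw]
  have key : ∀ v ∈ G.fiberV P x, v ≠ r →
      ∃ e, e ∈ G.fiberE P x ∧ v ∈ G.ends e ∧ ∃ u ∈ G.ends e, dd u < dd v := by
    intro v hv hvr
    have h1 : ∃ k, reach k v := hreach v hv
    have hspec : reach (Nat.find h1) v := Nat.find_spec h1
    have hd0 : Nat.find h1 ≠ 0 := by
      intro h0
      rw [h0] at hspec
      obtain ⟨c, hc0, hck, -⟩ := hspec
      exact hvr (hck.symm.trans hc0)
    obtain ⟨m, hm⟩ : ∃ m, Nat.find h1 = m + 1 := ⟨Nat.find h1 - 1, by omega⟩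
    rw [hm] at hspec
    obtain ⟨c, hc0, hck, hstep⟩ := hspec
    obtain ⟨e, heP, hu, hv'⟩ := hstep m (by omega)
    rw [hck] at hv'
    have hreachu : ∃ k, reach k (c m) := ⟨m, ⟨c, hc0, rfl, fun i hi => hstep i (by omega)⟩⟩
    refine ⟨e, ?_, hv', c m, hu, ?_⟩
    · refine Finset.mem_filter.mpr ⟨heP, ?_⟩
      intro w hw
      have hadj : G.PAdj P v w := ⟨e, heP, hv', hw⟩
      rw [← Quot.sound hadj]
      exact (Finset.mem_filter.mp hv).2
    · rw [hdd v h1, hdd (c m) hreachu, hm]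
      have : Nat.find hreachu ≤ m :=
        Nat.find_le ⟨c, hc0, rfl, fun i hi => hstep i (by omega)⟩
      omega
  have hcard : ((G.fiberV P x).erase r).card ≤ (G.fiberE P x).card := by
    rcases ((G.fiberV P x).erase r).eq_empty_or_nonempty with he2 | ⟨v0, hv0⟩
    · simp [he2]
    · have hv0' := Finset.mem_erase.mp hv0
      obtain ⟨e0, he0, -⟩ := key v0 hv0'.2 hv0'.1
      haveI : Nonempty G.E := ⟨e0⟩
      set Q : G.V → G.E → Prop := fun v e =>
        e ∈ G.fiberE P x ∧ v ∈ G.ends e ∧ ∃ u ∈ G.ends e, dd u < dd v with hQ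
      set f : G.V → G.E := fun v =>
        if h : ∃ e, Q v e then h.choose else Classical.arbitrary G.E with hfdef
      have hf : ∀ v ∈ (G.fiberV P x).erase r, Q v (f v) := by
        intro v hv
        have hv' := Finset.mem_erase.mp hv
        have hex : ∃ e, Q v e := by
          obtain ⟨e, h1, h2, h3⟩ := key v hv'.2 hv'.1
          exact ⟨e, h1, h2, h3⟩
        simp only [hfdef, dif_pos hex]
        exact hex.choose_spec
      refine Finset.card_le_card_of_injOn f (fun v hv => (hf v hv).1) ?_
      intro v1 hv1 v2 hv2 hfe
      by_contra hne
      obtain ⟨h1e, h1m, u1, hu1, hd1⟩ := hf v1 hv1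
      obtain ⟨h2e, h2m, u2, hu2, hd2⟩ := hf v2 hv2
      rw [hfe] at h1m hu1
      have hz : G.ends (f v2) = s(v1, v2) :=
        Sym2.eq_of_ne_mem hne h1m h2m (Sym2.mem_mk_left v1 v2) (Sym2.mem_mk_right v1 v2)
      rw [hz] at hu1 hu2
      rcases Sym2.mem_iff.mp hu1 with rfl | rfl
      · exact absurd hd1 (lt_irrefl _)
      · rcases Sym2.mem_iff.mp hu2 with rfl | rfl
        · omega
        · exact absurd hd2 (lt_irrefl _)
  have := Finset.card_erase_add_one hr
  omega

end Aux
lemma sum_fiber_eq {α β M : Type*} [Fintype α] [Fintype β] [AddCommMonoid M]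
    (f : α → β) (g : α → M) :
    ∑ b : β, ∑ a ∈ Finset.univ.filter (fun a => f a = b), g a = ∑ a, g a := by
  calc ∑ b : β, ∑ a ∈ Finset.univ.filter (fun a => f a = b), g a
      = ∑ b : β, ∑ a : α, if f a = b then g a else 0 :=
        Finset.sum_congr rfl fun b _ => Finset.sum_filter _ _
    _ = ∑ a : α, ∑ b : β, if f a = b then g a else 0 := Finset.sum_comm
    _ = ∑ a, g a := Finset.sum_congr rfl fun a _ => by simp

lemma sum_card_fiber {α β : Type*} [Fintype β] (s : Finset α) (f : α → β) :
    ∑ b : β, (s.filter (fun a => f a = b)).card = s.card := by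
  calc ∑ b : β, (s.filter (fun a => f a = b)).card
      = ∑ b : β, ∑ a ∈ s, if f a = b then 1 else 0 :=
        Finset.sum_congr rfl fun b _ => by rw [Finset.card_filter]
    _ = ∑ a ∈ s, ∑ b : β, if f a = b then 1 else 0 := Finset.sum_comm
    _ = ∑ a ∈ s, 1 := Finset.sum_congr rfl fun a _ => by simp
    _ = s.card := by simp

lemma WGraph.compV_subsingleton (G : WGraph) (hc : G.Connected)
    (a b : G.CompV Finset.univ) : a = b := by
  obtain ⟨u, rfl⟩ := Quot.exists_rep a
  obtain ⟨v, rfl⟩ := Quot.exists_rep b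
  exact Quot.eqvGen_sound (hc u v)

lemma WGraph.conn_card (G : WGraph) (hc : G.Connected) :
    Fintype.card G.V ≤ Fintype.card G.E + 1 := by
  obtain ⟨x⟩ : Nonempty (G.CompV Finset.univ) := inferInstance
  have h1 : G.fiberV Finset.univ x = Finset.univ := by
    ext v
    simp [WGraph.fiberV, G.compV_subsingleton hc (Quot.mk _ v) x]
    rfl
  have h2 := G.card_fiberV_le Finset.univ x
  rw [h1] at h2
  calc Fintype.card G.V = (Finset.univ : Finset G.V).card := rfl
    _ ≤ (G.fiberE Finset.univ x).card + 1 := h2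
    _ ≤ Fintype.card G.E + 1 := Nat.add_le_add_right (Finset.card_le_univ _) 1

lemma WGraph.numComp_eq_one (G : WGraph) (hc : G.Connected) : G.numComp = 1 := by
  rw [WGraph.numComp, Nat.card_eq_one_iff_unique]
  exact ⟨⟨G.compV_subsingleton hc⟩, inferInstance⟩

lemma WGraph.contract_connected (G : WGraph) (P : Finset G.E) (hc : G.Connected) :
    (G.contract P).Connected := by
  intro a b
  obtain ⟨u, rfl⟩ := Quot.exists_rep a
  obtain ⟨v, rfl⟩ := Quot.exists_rep b
  induction hc u v with
  | rel u v huv =>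
      obtain ⟨e, -, hu, hv⟩ := huv
      by_cases he : e ∈ P
      · have hq : Quot.mk (G.PAdj P) u = Quot.mk (G.PAdj P) v := Quot.sound ⟨e, he, hu, hv⟩
        rw [show ((Quot.mk (G.PAdj P) u : G.CompV P)) = Quot.mk (G.PAdj P) v from hq]
        exact Relation.EqvGen.refl _
      · refine Relation.EqvGen.rel _ _ ⟨⟨e, he⟩, Finset.mem_univ _, ?_, ?_⟩
        · exact Sym2.mem_map.mpr ⟨u, hu, rfl⟩
        · exact Sym2.mem_map.mpr ⟨v, hv, rfl⟩
  | refl u => exact Relation.EqvGen.refl _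
  | symm u v _ ih => exact Relation.EqvGen.symm _ _ ih
  | trans u v w _ _ ih1 ih2 => exact Relation.EqvGen.trans _ _ _ ih1 ih2

lemma WGraph.card_compV_le (G : WGraph) (P : Finset G.E) (hc : G.Connected) :
    Fintype.card (G.CompV P) ≤ (Fintype.card G.E - P.card) + 1 := by
  have h := (G.contract P).conn_card (G.contract_connected P hc)
  have hE : Fintype.card (G.contract P).E = Fintype.card G.E - P.card := by
    have : Fintype.card {e : G.E // e ∉ P} = Fintype.card G.E - P.card := by
      simp [Fintype.card_subtype_compl]
    convert this
    rfl
  have hV : Fintype.card (G.contract P).V = Fintype.card (G.CompV P) := by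
    convert rfl
    rfl
  rw [hE, hV] at h
  exact h
lemma WGraph.endPair_fst_mem (G : WGraph) (e : G.E) : (G.endPair e).1 ∈ G.ends e := by
  have key : ∀ (z : Sym2 G.V) (p : G.V × G.V), Quot.mk _ p = z → p.1 ∈ z := by
    rintro z ⟨a, b⟩ rfl
    exact Sym2.mem_mk_left a b
  exact key _ _ (Classical.choose_spec (Quot.exists_rep (G.ends e)))

lemma parity_eq_zero_of_genus_zero (G : WGraph) (σ : SpinStructure G)
    (hst : G.Stable) (hg : G.genus = 0) : σ.parity = 0 := by
  obtain ⟨hconn, -⟩ := hst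
  have hnc := G.numComp_eq_one hconn
  have hz : (∑ v, G.w v) = 0 ∧ G.b1 = 0 := by
    rw [WGraph.genus] at hg; omega
  have hw : ∀ v, G.w v = 0 := fun v =>
    Finset.sum_eq_zero_iff.mp hz.1 v (Finset.mem_univ v)
  have hb1 : Fintype.card G.E + 1 ≤ Fintype.card G.V := by
    have h0 := hz.2
    rw [WGraph.b1, hnc] at h0; omega
  set P := σ.P with hPdef
  have hV : ∑ x : G.CompV P, (G.fiberV P x).card = Fintype.card G.V := by
    simp only [WGraph.fiberV]
    exact (sum_card_fiber (β := G.CompV P) Finset.univ (fun v => Quot.mk (G.PAdj P) v)).trans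
      Finset.card_univ
  have hE' : ∑ x : G.CompV P, (G.fiberE P x).card = P.card := by
    have hxcl : ∀ x : G.CompV P, G.fiberE P x
        = P.filter (fun e => Quot.mk (G.PAdj P) (G.endPair e).1 = x) := by
      intro x
      ext e
      simp only [WGraph.fiberE, Finset.mem_filter]
      constructor
      · rintro ⟨heP, hall⟩
        exact ⟨heP, hall _ (G.endPair_fst_mem e)⟩
      · rintro ⟨heP, hcl⟩
        refine ⟨heP, fun v hv => ?_⟩
        have hadj : G.PAdj P (G.endPair e).1 v := ⟨e, heP, G.endPair_fst_mem e, hv⟩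
        rw [← Quot.sound hadj]
        exact hcl
    have hcards : ∀ x : G.CompV P, (G.fiberE P x).card
        = (P.filter (fun e => Quot.mk (G.PAdj P) (G.endPair e).1 = x)).card :=
      fun x => by rw [hxcl x]
    rw [Finset.sum_congr rfl (fun x _ => hcards x)]
    exact sum_card_fiber (β := G.CompV P) P (fun e => Quot.mk (G.PAdj P) (G.endPair e).1)
  have hle : ∀ x ∈ (Finset.univ : Finset (G.CompV P)),
      (G.fiberV P x).card ≤ (G.fiberE P x).card + 1 :=
    fun x _ => G.card_fiberV_le P x
  have hsum : ∑ x : G.CompV P, (G.fiberV P x).card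
      = ∑ x : G.CompV P, ((G.fiberE P x).card + 1) := by
    have hc := G.card_compV_le P hconn
    have hPle : P.card ≤ Fintype.card G.E := Finset.card_le_univ P
    have e1 : ∑ x : G.CompV P, ((G.fiberE P x).card + 1)
        = P.card + Fintype.card (G.CompV P) := by
      rw [Finset.sum_add_distrib, hE']
      simp
    have le1 : ∑ x : G.CompV P, (G.fiberV P x).card
        ≤ ∑ x : G.CompV P, ((G.fiberE P x).card + 1) := Finset.sum_le_sum hle
    omega
  have hper := (Finset.sum_eq_sum_iff_of_le hle).mp hsum
  have hqw : ∀ x : G.CompV P, G.quotWeight P x = 0 := by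
    intro x
    have hx := hper x (Finset.mem_univ x)
    rw [WGraph.quotWeight, Finset.sum_eq_zero (fun v _ => hw v), hx]
    omega
  rw [SpinStructure.parity]
  exact Finset.sum_eq_zero (fun x _ => σ.vanish x (hqw x))
lemma parity_eq_of_spinMapsTo {G G' : WGraph} (γ : Contraction G G')
    {σ : SpinStructure G} {σ' : SpinStructure G'} (hm : γ.SpinMapsTo σ σ') :
    σ'.parity = σ.parity := by
  obtain ⟨P', cyc', s', van'⟩ := σ'
  obtain ⟨hP, hs⟩ := hm
  simp only at hP hs
  subst hP
  have hseq : s' = γ.pushS σ.P σ.s := eq_of_heq hs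
  subst hseq
  have hstep : ∀ u v : G.V, G.PAdj σ.P u v →
      Quot.mk (G'.PAdj (γ.pushE σ.P)) (γ.vMap u)
        = Quot.mk (G'.PAdj (γ.pushE σ.P)) (γ.vMap v) := by
    rintro u v ⟨e, heP, hu, hv⟩
    by_cases hF : e ∈ γ.F
    · rw [γ.collapse e hF u hu v hv]
    · refine Quot.sound ⟨γ.eEquiv.symm ⟨e, hF⟩, ?_, ?_, ?_⟩
      · simp only [Contraction.pushE, Finset.mem_filter, Finset.mem_univ, true_and,
          Equiv.apply_symm_apply]
        exact heP
      · rw [γ.ends_compat, Equiv.apply_symm_apply]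
        exact Sym2.mem_map.mpr ⟨u, hu, rfl⟩
      · rw [γ.ends_compat, Equiv.apply_symm_apply]
        exact Sym2.mem_map.mpr ⟨v, hv, rfl⟩
  set φ : G.CompV σ.P → G'.CompV (γ.pushE σ.P) :=
    Quot.lift (fun v => Quot.mk (G'.PAdj (γ.pushE σ.P)) (γ.vMap v)) hstep with hφ
  have hfilter : ∀ x' : G'.CompV (γ.pushE σ.P),
      Finset.univ.filter (fun x => γ.compMapsTo σ.P (γ.pushE σ.P) x x')
        = Finset.univ.filter (fun x => φ x = x') := by
    intro x'
    ext x
    simp only [Finset.mem_filter, Finset.mem_univ, true_and]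
    constructor
    · rintro ⟨v, rfl, rfl⟩
      rfl
    · rintro rfl
      obtain ⟨v, rfl⟩ := Quot.exists_rep x
      exact ⟨v, rfl, rfl⟩
  show ∑ x', γ.pushS σ.P σ.s x' = σ.parity
  calc ∑ x', γ.pushS σ.P σ.s x'
      = ∑ x', ∑ x ∈ Finset.univ.filter (fun x => φ x = x'), σ.s x :=
        Finset.sum_congr rfl fun x' _ => by rw [Contraction.pushS, hfilter x']
    _ = ∑ x, σ.s x := sum_fiber_eq (β := G'.CompV (γ.pushE σ.P)) φ σ.s
    _ = σ.parity := rfl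
abbrev Rgraph (g n : ℕ) : WGraph where
  V := Unit
  E := Empty
  Lg := Fin n
  fV := inferInstance
  fE := inferInstance
  fL := inferInstance
  dV := inferInstance
  dE := inferInstance
  dL := inferInstance
  neV := ⟨()⟩
  ends := fun e => e.elim
  legEnd := fun _ => ()
  w := fun _ => g

lemma Rgraph_compV_subsingleton (g n : ℕ) (Q : Finset (Rgraph g n).E)
    (a b : (Rgraph g n).CompV Q) : a = b := by
  obtain ⟨u, rfl⟩ := Quot.exists_rep a
  obtain ⟨v, rfl⟩ := Quot.exists_rep b
  cases u; cases v; rfl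

lemma Rgraph_card_compV (g n : ℕ) (Q : Finset (Rgraph g n).E) :
    Fintype.card ((Rgraph g n).CompV Q) = 1 :=
  le_antisymm (Fintype.card_le_one_iff.mpr (Rgraph_compV_subsingleton g n Q))
    Fintype.card_pos

lemma Rgraph_quotWeight (g n : ℕ) (Q : Finset (Rgraph g n).E)
    (x : (Rgraph g n).CompV Q) : (Rgraph g n).quotWeight Q x = g := by
  have h1 : (Rgraph g n).fiberV Q x = Finset.univ := by
    ext v
    simp [WGraph.fiberV, Rgraph_compV_subsingleton g n Q (Quot.mk _ v) x]
    split_ifs with hx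
    · exact Finset.mem_singleton_self _
    · exact absurd rfl hx
  have h2 : (Rgraph g n).fiberE Q x = ∅ :=
    Finset.eq_empty_of_forall_notMem (fun e => (e : Empty).elim)
  rw [WGraph.quotWeight, h1, h2]
  simp

lemma Rgraph_connected (g n : ℕ) : (Rgraph g n).Connected := by
  intro u v
  cases u; cases v
  exact Relation.EqvGen.refl _

lemma Rgraph_stG (g n : ℕ) (h : 2 < 2 * g + n) : StG g n (Rgraph g n) := by
  have hdeg : ∀ v, (Rgraph g n).deg v = 0 := by
    intro v; rw [WGraph.deg]; simp
  have hlegs : ∀ v, (Rgraph g n).legsAt v = n := by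
    intro v
    rw [WGraph.legsAt, Finset.filter_true_of_mem (fun l _ => rfl)]
    simp
  refine ⟨⟨Rgraph_connected g n, ?_⟩, ?_, ?_⟩
  · intro v
    rw [hdeg, hlegs]
    show 2 < 2 * g + 0 + n
    omega
  · rw [WGraph.genus, WGraph.b1, (Rgraph g n).numComp_eq_one (Rgraph_connected g n)]
    simp
  · rw [WGraph.numLegs]; simp

def Rsigma (g n : ℕ) (p : ZMod 2) (hp : g = 0 → p = 0) : SpinStructure (Rgraph g n) where
  P := ∅
  cyclic := by
    rw [WGraph.IsCyclic]
    funext v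
    simp [WGraph.boundary, WGraph.indicator]
  s := fun _ => p
  vanish := by
    intro x hx
    rw [Rgraph_quotWeight] at hx
    exact hp hx

lemma Rsigma_parity (g n : ℕ) (p : ZMod 2) (hp : g = 0 → p = 0) :
    (Rsigma g n p hp).parity = p := by
  rw [SpinStructure.parity]
  show ∑ _x : (Rgraph g n).CompV (Rsigma g n p hp).P, p = p
  rw [Finset.sum_const, Finset.card_univ, Rgraph_card_compV, one_smul]

def toR (g n : ℕ) (G : WGraph) (hst : StG g n G) : Contraction G (Rgraph g n) where
  F := Finset.univ
  vMap := fun _ => ()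
  eEquiv := @Equiv.equivOfIsEmpty _ _ inferInstance ⟨fun x => x.2 (Finset.mem_univ x.1)⟩
  lEquiv := Fintype.equivOfCardEq (by rw [Fintype.card_fin, ← hst.2.2]; rfl)
  vSurj := fun v => ⟨Classical.arbitrary G.V, rfl⟩
  ends_compat := fun e' => (e' : Empty).elim
  leg_compat := fun _ => rfl
  collapse := fun _ _ _ _ _ _ => rfl
  fiber_conn := fun u v _ => hst.1.1 u v
  w_compat := by
    intro v'
    have h1 : (Finset.univ.filter fun v : G.V => (fun _ : G.V => ()) v = v') = Finset.univ :=
      Finset.filter_true_of_mem (fun _ _ => rfl)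
    have h2 : ((Finset.univ : Finset G.E).filter
        fun e => ∀ u ∈ G.ends e, (fun _ : G.V => ()) u = v') = Finset.univ :=
      Finset.filter_true_of_mem (fun _ _ => fun _ _ => rfl)
    rw [h1, h2]
    have hg := hst.2.1
    rw [WGraph.genus, WGraph.b1, G.numComp_eq_one hst.1.1] at hg
    simp only [Finset.card_univ]
    omega

lemma toR_spinMapsTo (g n : ℕ) (G : WGraph) (hst : StG g n G) (σ : SpinStructure G)
    (p : ZMod 2) (hp : g = 0 → p = 0) (hpar : σ.parity = p) :
    (toR g n G hst).SpinMapsTo σ (Rsigma g n p hp) := by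
  set γ := toR g n G hst with hγ
  have hP : γ.pushE σ.P = (∅ : Finset (Rgraph g n).E) :=
    Finset.eq_empty_of_forall_notMem (fun e => (e : Empty).elim)
  refine ⟨hP.symm, ?_⟩
  have hval : ∀ x', γ.pushS σ.P σ.s x' = p := by
    intro x'
    rw [Contraction.pushS, Finset.filter_true_of_mem, ← hpar]
    · rfl
    · intro x _
      obtain ⟨v, rfl⟩ := Quot.exists_rep x
      exact ⟨v, rfl, Rgraph_compV_subsingleton g n _ _ _⟩
  have key : ∀ (Q : Finset (Rgraph g n).E) (f : (Rgraph g n).CompV Q → ZMod 2),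
      Q = ∅ → (∀ x, f x = p) → HEq ((Rsigma g n p hp).s) f := by
    rintro Q f rfl hf
    exact heq_of_eq (funext fun x => (hf x).symm)
  exact key _ _ hP hval

lemma connect_of_parity_eq (g n : ℕ) (h : 2 < 2 * g + n)
    (a b : {x : SpinObj // StG g n x.1})
    (hpa : g = 0 → a.1.2.parity = 0) (hpb : g = 0 → b.1.2.parity = 0)
    (hpar : a.1.2.parity = b.1.2.parity) :
    Relation.EqvGen
      (fun x y : {x : SpinObj // StG g n x.1} =>
        SpinGe x.1 y.1 ∨ SpinGe y.1 x.1) a b := by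
  set c : {x : SpinObj // StG g n x.1} :=
    ⟨⟨Rgraph g n, Rsigma g n a.1.2.parity hpa⟩, Rgraph_stG g n h⟩ with hc
  set c' : {x : SpinObj // StG g n x.1} :=
    ⟨⟨Rgraph g n, Rsigma g n b.1.2.parity hpb⟩, Rgraph_stG g n h⟩ with hc'
  have hgen : ∀ (p q : ZMod 2) (hq : g = 0 → p = 0) (hq' : g = 0 → q = 0), p = q →
      (⟨⟨Rgraph g n, Rsigma g n p hq⟩, Rgraph_stG g n h⟩ : {x : SpinObj // StG g n x.1})
        = ⟨⟨Rgraph g n, Rsigma g n q hq'⟩, Rgraph_stG g n h⟩ := by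
    rintro p q hq hq' rfl
    rfl
  have hcc : c = c' := hgen _ _ hpa hpb hpar
  have ha : SpinGe a.1 c.1 :=
    ⟨toR g n a.1.1 a.2, toR_spinMapsTo g n a.1.1 a.2 a.1.2 _ hpa rfl⟩
  have hb : SpinGe b.1 c.1 := by
    rw [hcc]
    exact ⟨toR g n b.1.1 b.2, toR_spinMapsTo g n b.1.1 b.2 b.1.2 _ hpb rfl⟩
  exact Relation.EqvGen.trans _ _ _
    (Relation.EqvGen.rel _ _ (Or.inl ha))
    (Relation.EqvGen.symm _ _ (Relation.EqvGen.rel _ _ (Or.inl hb)))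

lemma parity_eq_of_rel {a b : SpinObj} (hr : SpinGe a b ∨ SpinGe b a) :
    a.2.parity = b.2.parity := by
  rcases hr with ⟨γ, hγ⟩ | ⟨γ, hγ⟩
  · exact (parity_eq_of_spinMapsTo γ hγ).symm
  · exact parity_eq_of_spinMapsTo γ hγ
/-- Assume `2g − 2 + n > 0`.  If `g > 0`, the poset
`SP_{g,n}` of stable spin graphs of genus `g` with `n` legs has exactly two
connected components, `SP⁺_{g,n}` and `SP⁻_{g,n}`, the even and odd spin
graphs: both parities occur, and two stable spin graphs lie in the same
connected component of the poset iff they have the same parity.  If `g = 0`,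
then `SP_{g,n} = SP⁺_{g,n}` and the poset is connected. -/
theorem spin_poset_connected_components (g n : ℕ) (h : 2 < 2 * g + n) :
    (0 < g →
      (∃ a : {x : SpinObj // StG g n x.1}, a.1.2.parity = 1) ∧
      (∃ a : {x : SpinObj // StG g n x.1}, a.1.2.parity = 0) ∧
      (∀ a b : {x : SpinObj // StG g n x.1},
        Relation.EqvGen
          (fun x y : {x : SpinObj // StG g n x.1} =>
            SpinGe x.1 y.1 ∨ SpinGe y.1 x.1) a b
          ↔ a.1.2.parity = b.1.2.parity)) ∧
    (g = 0 →
      (∀ a : {x : SpinObj // StG g n x.1}, a.1.2.parity = 0) ∧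
      (∀ a b : {x : SpinObj // StG g n x.1},
        Relation.EqvGen
          (fun x y : {x : SpinObj // StG g n x.1} =>
            SpinGe x.1 y.1 ∨ SpinGe y.1 x.1) a b)) := by
  constructor
  · intro hg
    have hp1 : g = 0 → (1 : ZMod 2) = 0 := fun h0 => absurd h0 (by omega)
    have hp0 : g = 0 → (0 : ZMod 2) = 0 := fun _ => rfl
    refine ⟨⟨⟨⟨Rgraph g n, Rsigma g n 1 hp1⟩, Rgraph_stG g n h⟩, Rsigma_parity g n 1 hp1⟩,
      ⟨⟨⟨Rgraph g n, Rsigma g n 0 hp0⟩, Rgraph_stG g n h⟩, Rsigma_parity g n 0 hp0⟩, ?_⟩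
    intro a b
    constructor
    · intro hab
      induction hab with
      | rel x y hxy => exact parity_eq_of_rel hxy
      | refl x => rfl
      | symm x y _ ih => exact ih.symm
      | trans x y z _ _ ih1 ih2 => exact ih1.trans ih2
    · intro hpar
      exact connect_of_parity_eq g n h a b
        (fun h0 => absurd h0 (by omega)) (fun h0 => absurd h0 (by omega)) hpar
  · intro hg0
    have hall : ∀ a : {x : SpinObj // StG g n x.1}, a.1.2.parity = 0 := fun a =>
      parity_eq_zero_of_genus_zero a.1.1 a.1.2 a.2.1 (hg0 ▸ a.2.2.1)
    refine ⟨hall, ?_⟩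
    intro a b
    exact connect_of_parity_eq g n h a b (fun _ => hall a) (fun _ => hall b)
      ((hall a).trans (hall b).symm)

end
end

section
/- Let g > 0 and let G be a stable graph of genus g with n legs. Then G admits an odd spin structure, i.e., SP⁻_G ≠ ∅. -/
/-!
Common combinatorial preliminaries: weighted graphs with legs, contractions,
spin structures, following Caporaso–Melo–Pacini, "Tropicalizing the moduli
space of spin curves".
-/

attribute [local instance] Classical.propDecidable

noncomputable section

section AuxOddSpin

private lemma sym2_rep {α : Type*} (z : Sym2 α) : ∃ a b, z = s(a, b) :=
  Sym2.ind (fun a b => ⟨a, b, rfl⟩) z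

namespace WGraph

variable (G : WGraph)

private lemma degMul_formula {v : G.V} {e : G.E} {a b : G.V} (h : G.ends e = s(a, b)) :
    G.degMul v e = (if a = v then 1 else 0) + (if b = v then 1 else 0) := by
  simp [WGraph.degMul, h]

private lemma sum_degMul (e : G.E) : ∑ v, G.degMul v e = 2 := by
  obtain ⟨a, b, h⟩ := sym2_rep (G.ends e)
  simp [G.degMul_formula h, Finset.sum_add_distrib, Finset.sum_ite_eq]

private lemma one_le_degMul {v : G.V} {e : G.E} (h : v ∈ G.ends e) : 1 ≤ G.degMul v e := by
  obtain ⟨a, b, hab⟩ := sym2_rep (G.ends e)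
  rw [hab, Sym2.mem_iff] at h
  rw [G.degMul_formula hab]
  rcases h with rfl | rfl <;> simp <;> split <;> omega

private lemma mem_of_degMul_ne {v : G.V} {e : G.E} (h : G.degMul v e ≠ 0) :
    v ∈ G.ends e := by
  obtain ⟨a, b, hab⟩ := sym2_rep (G.ends e)
  rw [G.degMul_formula hab] at h
  rw [hab, Sym2.mem_iff]
  by_contra hc
  push_neg at hc
  simp [Ne.symm hc.1, Ne.symm hc.2] at h

private lemma eqvGen_endpoint (P : Finset G.E) {a b : G.V}
    (h : Relation.EqvGen (G.PAdj P) a b) :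
    a = b ∨ ((∃ e ∈ P, a ∈ G.ends e) ∧ ∃ e ∈ P, b ∈ G.ends e) := by
  induction h with
  | rel x y hxy =>
    obtain ⟨e, he, hx, hy⟩ := hxy
    exact Or.inr ⟨⟨e, he, hx⟩, ⟨e, he, hy⟩⟩
  | refl x => exact Or.inl rfl
  | symm x y _ ih =>
    rcases ih with h | h
    · exact Or.inl h.symm
    · exact Or.inr ⟨h.2, h.1⟩
  | trans x y z _ _ ih1 ih2 =>
    rcases ih1 with rfl | h1
    · exact ih2
    · rcases ih2 with rfl | h2
      · exact Or.inr h1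
      · exact Or.inr ⟨h1.1, h2.2⟩

/-- A single component of positive genus in `G/P` yields an odd spin structure. -/
private lemma spin_of_component (P : Finset G.E) (hc : G.IsCyclic P)
    (x₀ : G.CompV P) (hx : 0 < G.quotWeight P x₀) :
    ∃ σ : SpinStructure G, σ.parity = 1 := by
  refine ⟨⟨P, hc, fun x => if x = x₀ then 1 else 0, ?_⟩, ?_⟩
  · intro x h0
    show (if x = x₀ then (1 : ZMod 2) else 0) = 0
    rw [if_neg]
    rintro rfl
    omega
  · simp [SpinStructure.parity, Finset.sum_ite_eq']

private lemma empty_cyclic : G.IsCyclic (∅ : Finset G.E) := by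
  have : G.indicator (∅ : Finset G.E) = 0 := by
    funext e; simp [WGraph.indicator]
  unfold WGraph.IsCyclic
  rw [this, map_zero]

private lemma quot_mk_empty_inj :
    Function.Injective (Quot.mk (G.PAdj (∅ : Finset G.E))) := by
  intro u v h
  rcases G.eqvGen_endpoint ∅ (Quot.eqvGen_exact h) with h' | ⟨⟨e, he, _⟩, _⟩
  · exact h'
  · simp at he

private lemma quotWeight_empty (v : G.V) :
    G.quotWeight (∅ : Finset G.E) (Quot.mk _ v) = G.w v := by
  have hV : G.fiberV ∅ (Quot.mk _ v) = {v} := by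
    ext u
    simp only [WGraph.fiberV, Finset.mem_filter, Finset.mem_univ, true_and, Finset.mem_singleton]
    exact ⟨fun h => G.quot_mk_empty_inj h, by rintro rfl; rfl⟩
  have hE : G.fiberE (∅ : Finset G.E) (Quot.mk _ v) = ∅ := by
    simp [WGraph.fiberE]
  simp [WGraph.quotWeight, hV, hE]

/-- If `b₁(G) > 0` then the cycle space is nontrivial. -/
private lemma exists_cycle (hb : 0 < G.b1) :
    ∃ x : G.E → ZMod 2, x ≠ 0 ∧ G.boundary x = 0 := by
  classical
  let Q := G.CompV (Finset.univ : Finset G.E)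
  let q : G.V → Q := Quot.mk (G.PAdj Finset.univ)
  have hq : Function.Surjective q := fun x => Quot.exists_rep x
  let r : Q → G.V := fun x => (hq x).choose
  have hr : ∀ x, q (r x) = x := fun x => (hq x).choose_spec
  let S : (G.V → ZMod 2) →ₗ[ZMod 2] (Q → ZMod 2) :=
    { toFun := fun y x => ∑ v ∈ Finset.univ.filter (fun v => q v = x), y v
      map_add' := by intro y z; funext x; simp [Finset.sum_add_distrib]
      map_smul' := by intro c y; funext x; simp [Finset.mul_sum] }
  have hSsurj : Function.Surjective S := by
    intro z
    refine ⟨fun v => if v = r (q v) then z (q v) else 0, ?_⟩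
    funext x
    show (∑ v ∈ Finset.univ.filter (fun v => q v = x),
        if v = r (q v) then z (q v) else 0) = z x
    rw [Finset.sum_congr rfl (g := fun v => if v = r x then z x else 0) ?_]
    · rw [Finset.sum_ite_eq']
      rw [if_pos]
      simp only [Finset.mem_filter, Finset.mem_univ, true_and]
      exact hr x
    · intro v hv
      simp only [Finset.mem_filter, Finset.mem_univ, true_and] at hv
      rw [hv]
  have hcomp : ∀ y : G.E → ZMod 2, S (G.boundary y) = 0 := by
    intro y
    funext x
    show (∑ v ∈ Finset.univ.filter (fun v => q v = x),
        ∑ e, y e * (G.degMul v e : ZMod 2)) = 0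
    rw [Finset.sum_comm]
    apply Finset.sum_eq_zero
    intro e _
    rw [← Finset.mul_sum]
    have : (∑ v ∈ Finset.univ.filter (fun v => q v = x),
        (G.degMul v e : ZMod 2)) = 0 := by
      obtain ⟨a, b, hab⟩ := sym2_rep (G.ends e)
      have hqa : q a = q b := by
        apply Quot.sound
        exact ⟨e, Finset.mem_univ e, by rw [hab]; simp, by rw [hab]; simp⟩
      have : ∀ v, (G.degMul v e : ZMod 2)
          = (if a = v then 1 else 0) + (if b = v then 1 else 0) := by
        intro v
        rw [G.degMul_formula hab]
        push_cast
        split <;> split <;> simp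
      rw [Finset.sum_congr rfl fun v _ => this v]
      rw [Finset.sum_add_distrib, Finset.sum_ite_eq, Finset.sum_ite_eq]
      simp only [Finset.mem_filter, Finset.mem_univ, true_and]
      by_cases hax : q a = x
      · rw [if_pos hax, if_pos (hqa ▸ hax)]
        decide
      · rw [if_neg hax, if_neg (fun h => hax (hqa ▸ h))]
        decide
    rw [this, mul_zero]
  have hrange : LinearMap.range G.boundary ≤ LinearMap.ker S := by
    rintro _ ⟨y, rfl⟩
    exact LinearMap.mem_ker.mpr (hcomp y)
  have h1 := LinearMap.finrank_range_add_finrank_ker G.boundary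
  have h2 := LinearMap.finrank_range_add_finrank_ker S
  rw [LinearMap.range_eq_top.mpr hSsurj, finrank_top] at h2
  have hmono : Module.finrank (ZMod 2) (LinearMap.range G.boundary)
      ≤ Module.finrank (ZMod 2) (LinearMap.ker S) := Submodule.finrank_mono hrange
  have hE : Module.finrank (ZMod 2) (G.E → ZMod 2) = Fintype.card G.E :=
    Module.finrank_fintype_fun_eq_card _
  have hV : Module.finrank (ZMod 2) (G.V → ZMod 2) = Fintype.card G.V :=
    Module.finrank_fintype_fun_eq_card _
  have hQ : Module.finrank (ZMod 2) (Q → ZMod 2) = Fintype.card Q :=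
    Module.finrank_fintype_fun_eq_card _
  have hnc : G.numComp = Fintype.card Q := Nat.card_eq_fintype_card
  have hb' : 0 < Fintype.card G.E + Fintype.card Q - Fintype.card G.V := by
    unfold WGraph.b1 at hb
    omega
  have hker : 0 < Module.finrank (ZMod 2) (LinearMap.ker G.boundary) := by
    rw [hE] at h1
    rw [hV, hQ] at h2
    omega
  have hne : LinearMap.ker G.boundary ≠ ⊥ := by
    intro h
    rw [h, finrank_bot] at hker
    omega
  obtain ⟨x, hx, hx0⟩ := (LinearMap.ker G.boundary).ne_bot_iff.mp hne
  exact ⟨x, hx0, LinearMap.mem_ker.mp hx⟩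

/-- The component of an endpoint of an edge of a cyclic set `P` has positive
genus in `G/P`. -/
private lemma quotWeight_pos_of_cyclic (P : Finset G.E) (hc : G.IsCyclic P)
    {e₀ : G.E} (he₀ : e₀ ∈ P) {a : G.V} (ha : a ∈ G.ends e₀) :
    0 < G.quotWeight P (Quot.mk (G.PAdj P) a) := by
  classical
  set x₀ := Quot.mk (G.PAdj P) a with hx₀
  set V₀ := G.fiberV P x₀ with hV₀
  set E₀ := G.fiberE P x₀ with hE₀
  have hsub : E₀ ⊆ P := Finset.filter_subset _ _
  have stepA : ∀ v ∈ V₀, ∀ e ∈ P, v ∈ G.ends e → e ∈ E₀ := by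
    intro v hv e he hve
    have hvx : Quot.mk (G.PAdj P) v = x₀ := by
      simpa [hV₀, WGraph.fiberV] using hv
    rw [hE₀]
    unfold WGraph.fiberE
    rw [Finset.mem_filter]
    refine ⟨he, fun u hu => ?_⟩
    have : Quot.mk (G.PAdj P) u = Quot.mk (G.PAdj P) v :=
      Quot.sound ⟨e, he, hu, hve⟩
    rw [this, hvx]
  have stepB : ∀ v ∈ V₀, ∃ e ∈ P, v ∈ G.ends e := by
    intro v hv
    have hvx : Quot.mk (G.PAdj P) v = Quot.mk (G.PAdj P) a := by
      simpa [hV₀, WGraph.fiberV, hx₀] using hv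
    rcases G.eqvGen_endpoint P (Quot.eqvGen_exact hvx) with rfl | ⟨h1, _⟩
    · exact ⟨e₀, he₀, ha⟩
    · exact h1
  have stepC : ∀ v ∈ V₀, 2 ≤ ∑ e ∈ E₀, G.degMul v e := by
    intro v hv
    have hPsum : ((∑ e ∈ P, G.degMul v e : ℕ) : ZMod 2) = 0 := by
      have hbd : (∑ e, G.indicator P e * (G.degMul v e : ZMod 2)) = 0 := by
        have := congrFun hc v
        simpa [WGraph.boundary] using this
      have hsp : (∑ e, G.indicator P e * (G.degMul v e : ZMod 2))
          = ∑ e ∈ P, (G.degMul v e : ZMod 2) := by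
        rw [Finset.sum_congr rfl
          (g := fun e => if e ∈ P then (G.degMul v e : ZMod 2) else 0)
          (fun e _ => by by_cases h : e ∈ P <;> simp [WGraph.indicator, h])]
        rw [Finset.sum_ite_mem, Finset.univ_inter]
      push_cast
      rw [← hsp, hbd]
    have hdvd : 2 ∣ ∑ e ∈ P, G.degMul v e := by
      rw [← ZMod.natCast_eq_zero_iff]
      exact hPsum
    have heq : ∑ e ∈ E₀, G.degMul v e = ∑ e ∈ P, G.degMul v e := by
      apply Finset.sum_subset hsub
      intro e heP heE
      by_contra h0
      exact heE (stepA v hv e heP (G.mem_of_degMul_ne h0))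
    obtain ⟨e₁, he₁, hve₁⟩ := stepB v hv
    have h1 : 1 ≤ ∑ e ∈ P, G.degMul v e :=
      le_trans (G.one_le_degMul hve₁) (Finset.single_le_sum (fun _ _ => Nat.zero_le _) he₁)
    rw [heq]
    omega
  have hcount : V₀.card ≤ E₀.card := by
    have h1 : 2 * V₀.card ≤ ∑ v ∈ V₀, ∑ e ∈ E₀, G.degMul v e := by
      calc 2 * V₀.card = ∑ _v ∈ V₀, 2 := by rw [Finset.sum_const, smul_eq_mul, mul_comm]
      _ ≤ _ := Finset.sum_le_sum stepC
    have h2 : ∑ v ∈ V₀, ∑ e ∈ E₀, G.degMul v e = ∑ e ∈ E₀, ∑ v ∈ V₀, G.degMul v e :=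
      Finset.sum_comm
    have h3 : ∑ e ∈ E₀, ∑ v ∈ V₀, G.degMul v e ≤ ∑ e ∈ E₀, 2 := by
      apply Finset.sum_le_sum
      intro e _
      calc ∑ v ∈ V₀, G.degMul v e ≤ ∑ v, G.degMul v e :=
            Finset.sum_le_sum_of_subset (Finset.subset_univ V₀)
        _ = 2 := G.sum_degMul e
    rw [Finset.sum_const, smul_eq_mul] at h3
    omega
  have : 1 ≤ E₀.card + 1 - V₀.card := by omega
  unfold WGraph.quotWeight
  rw [← hE₀, ← hV₀]
  omega

end WGraph

end AuxOddSpin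

/-- Let `g > 0` and let `G` be a stable graph of genus `g`
with `n` legs.  Then `G` admits an odd spin structure: `SP⁻_G ≠ ∅`. -/
theorem odd_spin_structure_exists (g n : ℕ) (hg : 0 < g) (G : WGraph)
    (hst : G.Stable) (hgen : G.genus = g) (hn : G.numLegs = n) :
    ∃ σ : SpinStructure G, σ.parity = 1 := by
  by_cases hw : ∃ v, 0 < G.w v
  · obtain ⟨v, hv⟩ := hw
    apply G.spin_of_component ∅ (G.empty_cyclic) (Quot.mk _ v)
    rw [G.quotWeight_empty v]
    exact hv
  · push_neg at hw
    have hwsum : ∑ v, G.w v = 0 :=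
      Finset.sum_eq_zero (fun v _ => Nat.le_zero.mp (hw v))
    have hb : 0 < G.b1 := by
      have := hgen
      unfold WGraph.genus at this
      omega
    obtain ⟨x, hx0, hxk⟩ := G.exists_cycle hb
    set P : Finset G.E := Finset.univ.filter (fun e => x e = 1) with hP
    have hall : ∀ a : ZMod 2, a = 0 ∨ a = 1 := by decide
    have hind : G.indicator P = x := by
      funext e
      rcases hall (x e) with h | h
      · simp only [WGraph.indicator, hP, Finset.mem_filter, Finset.mem_univ, true_and, h]
        rw [if_neg (by decide)]
      · simp only [WGraph.indicator, hP, Finset.mem_filter, Finset.mem_univ, true_and, h]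
        simp
    have hcyc : G.IsCyclic P := by
      unfold WGraph.IsCyclic
      rw [hind]
      exact hxk
    have hPne : ∃ e, e ∈ P := by
      by_contra h
      push_neg at h
      apply hx0
      funext e
      rcases hall (x e) with h' | h'
      · exact h'
      · exact absurd (by simp [hP, h']) (h e)
    obtain ⟨e₀, he₀⟩ := hPne
    obtain ⟨a, b, hab⟩ := sym2_rep (G.ends e₀)
    have ha : a ∈ G.ends e₀ := by rw [hab]; simp
    exact G.spin_of_component P hcyc _ (G.quotWeight_pos_of_cyclic P hcyc he₀ ha)

end
end
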